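/- Let β ∈ ℝ, γ > 0, and let μ, ν be compactly supported probability measures on ℝ with infinite support such that μ = Φ_{β,γ}[ν]. Then for every n ≥ 1, L_μ[P^μ_n] = P^ν_{n−1}, i.e. applying L_μ to the n-th monic orthogonal polynomial of μ gives the (n−1)-st monic orthogonal polynomial of ν. -/

import Mathlib

open MeasureTheory Polynomial

/-- Moments of a measure on ℝ. -/
noncomputable def mom (ρ : Measure ℝ) (k : ℕ) : ℝ := ∫ x, x ^ k ∂ρ

/-- The operator `L_ρ` on polynomials, defined via the moment sequence `m` of `ρ`:
`L[x^n] = Σ_{k=0}^{n-1} m_{n-1-k} x^k`. -/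
noncomputable def Lop (m : ℕ → ℝ) (f : Polynomial ℝ) : Polynomial ℝ :=
  f.sum fun n a => C a * ∑ k ∈ Finset.range n, C (m (n - 1 - k)) * X ^ k

/-- A measure has compact support. -/
def CompactSupp (μ : Measure ℝ) : Prop := ∃ K : Set ℝ, IsCompact K ∧ μ Kᶜ = 0

/-- The (topological) support of a measure on ℝ. -/
def msupport (μ : Measure ℝ) : Set ℝ := {x | ∀ U ∈ nhds x, μ U ≠ 0}

/-- `JacobiShift β γ mν mμ` says (at the level of moment sequences) that `μ = Φ_{β,γ}[ν]`. -/
def JacobiShift (β γ : ℝ) (mν mμ : ℕ → ℝ) : Prop :=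
  ∀ n : ℕ, 1 ≤ n →
    mμ n = β * mμ (n - 1) + γ * ∑ i ∈ Finset.range (n - 1), mν i * mμ (n - 2 - i)

/-- `P` is the family of monic orthogonal polynomials of `ρ`. -/
def IsMonicOPS (ρ : Measure ℝ) (P : ℕ → Polynomial ℝ) : Prop :=
  (∀ n, (P n).Monic) ∧ (∀ n, (P n).natDegree = n) ∧
  ∀ n m : ℕ, n ≠ m → ∫ x, (P n).eval x * (P m).eval x ∂ρ = 0

section Helpers
open Finset

lemma integrable_eval {ρ : Measure ℝ} [IsFiniteMeasure ρ] (hcs : CompactSupp ρ)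
    (p : Polynomial ℝ) : Integrable (fun x => p.eval x) ρ := by
  obtain ⟨K, hK, hKc⟩ := hcs
  obtain ⟨C, hC⟩ := hK.exists_bound_of_continuousOn (p.continuous_aeval).continuousOn
  refine (integrable_const C).mono' (p.continuous_aeval).aestronglyMeasurable ?_
  have hae : ∀ᵐ x ∂ρ, x ∈ K := by
    rw [ae_iff]
    simpa [Set.compl_def] using hKc
  filter_upwards [hae] with x hx
  simpa using hC x hx

lemma integrable_pow {ρ : Measure ℝ} [IsFiniteMeasure ρ] (hcs : CompactSupp ρ)
    (k : ℕ) : Integrable (fun x : ℝ => x ^ k) ρ := by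
  have := integrable_eval hcs (X ^ k)
  simpa [eval_pow] using this

lemma int_mul_pow {ρ : Measure ℝ} [IsFiniteMeasure ρ] (hcs : CompactSupp ρ)
    (p : Polynomial ℝ) (j : ℕ) {N : ℕ} (hN : p.natDegree < N) :
    ∫ x, p.eval x * x ^ j ∂ρ = ∑ k ∈ range N, p.coeff k * mom ρ (k + j) := by
  have h1 : ∀ x : ℝ, p.eval x * x ^ j = ∑ k ∈ range N, p.coeff k * x ^ (k + j) := by
    intro x
    rw [eval_eq_sum_range' hN, Finset.sum_mul]
    refine Finset.sum_congr rfl fun k _ => ?_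
    rw [pow_add]; ring
  simp_rw [h1]
  rw [integral_finset_sum]
  · exact Finset.sum_congr rfl fun k _ => by rw [integral_const_mul]; rfl
  · exact fun k _ => (integrable_pow hcs _).const_mul _

lemma orth_poly {ρ : Measure ℝ} [IsFiniteMeasure ρ] (hcs : CompactSupp ρ)
    {P : ℕ → Polynomial ℝ} (hP : IsMonicOPS ρ P) :
    ∀ d : ℕ, ∀ q : Polynomial ℝ, q.natDegree ≤ d → ∀ n : ℕ, d < n →
      ∫ x, (P n).eval x * q.eval x ∂ρ = 0 := by
  obtain ⟨hmon, hdeg, horth⟩ := hP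
  have hP0 : P 0 = 1 := ((hmon 0).natDegree_eq_zero).mp (hdeg 0)
  intro d
  induction d with
  | zero =>
    intro q hq n hn
    have hqC : q = C (q.coeff 0) := Polynomial.eq_C_of_natDegree_le_zero hq
    have h0 := horth n 0 (by omega)
    rw [hP0] at h0
    simp only [eval_one, mul_one] at h0
    calc ∫ x, (P n).eval x * q.eval x ∂ρ
        = ∫ x, (P n).eval x * q.coeff 0 ∂ρ := by rw [hqC]; simp
      _ = (∫ x, (P n).eval x ∂ρ) * q.coeff 0 := by rw [integral_mul_const]
      _ = 0 := by rw [h0, zero_mul]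
  | succ d ih =>
    intro q hq n hn
    set r : Polynomial ℝ := q - C (q.coeff (d+1)) * P (d+1) with hr
    have hrc : ∀ m : ℕ, d < m → r.coeff m = 0 := by
      intro m hm
      rcases eq_or_lt_of_le (Nat.succ_le_of_lt hm) with h | h
      · simp [hr, ← h, coeff_C_mul]
        have : (P (d+1)).coeff (d+1) = 1 := by
          have := (hmon (d+1)).leadingCoeff
          rwa [Polynomial.leadingCoeff, hdeg] at this
        rw [this]; ring
      · have h1 : q.coeff m = 0 := coeff_eq_zero_of_natDegree_lt (by omega)
        have h2 : (P (d+1)).coeff m = 0 := coeff_eq_zero_of_natDegree_lt (by rw [hdeg]; omega)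
        simp [hr, coeff_C_mul, h1, h2]
    have hrdeg : r.natDegree ≤ d := Polynomial.natDegree_le_iff_coeff_eq_zero.mpr hrc
    have hint1 : Integrable (fun x => (P n).eval x * ((C (q.coeff (d+1)) * P (d+1)).eval x)) ρ := by
      have := integrable_eval hcs (P n * (C (q.coeff (d+1)) * P (d+1)))
      simpa [eval_mul] using this
    have hint2 : Integrable (fun x => (P n).eval x * r.eval x) ρ := by
      have := integrable_eval hcs (P n * r)
      simpa [eval_mul] using this
    calc ∫ x, (P n).eval x * q.eval x ∂ρ
        = ∫ x, ((P n).eval x * (C (q.coeff (d+1)) * P (d+1)).eval x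
            + (P n).eval x * r.eval x) ∂ρ := by
          congr 1 with x
          simp only [hr, eval_sub, eval_mul, eval_C]
          ring
      _ = (∫ x, (P n).eval x * (C (q.coeff (d+1)) * P (d+1)).eval x ∂ρ)
            + ∫ x, (P n).eval x * r.eval x ∂ρ := integral_add hint1 hint2
      _ = 0 := by
          have e1 : ∫ x, (P n).eval x * (C (q.coeff (d+1)) * P (d+1)).eval x ∂ρ = 0 := by
            have h0 := horth n (d+1) (by omega)
            calc ∫ x, (P n).eval x * (C (q.coeff (d+1)) * P (d+1)).eval x ∂ρ
                = ∫ x, q.coeff (d+1) * ((P n).eval x * (P (d+1)).eval x) ∂ρ := by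
                  congr 1 with x; simp [eval_mul]; ring
              _ = q.coeff (d+1) * ∫ x, (P n).eval x * (P (d+1)).eval x ∂ρ := integral_const_mul _ _
              _ = 0 := by rw [h0, mul_zero]
          have e2 : ∫ x, (P n).eval x * r.eval x ∂ρ = 0 := ih r hrdeg n (by omega)
          rw [e1, e2, add_zero]

lemma orth_pow {ρ : Measure ℝ} [IsFiniteMeasure ρ] (hcs : CompactSupp ρ)
    {P : ℕ → Polynomial ℝ} (hP : IsMonicOPS ρ P) {p n : ℕ} (hpn : p < n) :
    ∫ x, (P n).eval x * x ^ p ∂ρ = 0 := by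
  have := orth_poly hcs hP p (X ^ p) (natDegree_X_pow_le p) n hpn
  simpa [eval_pow] using this

lemma Lop_coeff (m : ℕ → ℝ) (f : Polynomial ℝ) (t : ℕ) :
    (Lop m f).coeff t
      = ∑ n ∈ range (f.natDegree + 1), f.coeff n * (if t < n then m (n - 1 - t) else 0) := by
  rw [Lop, f.sum_over_range (by simp)]
  rw [Polynomial.finset_sum_coeff]
  refine Finset.sum_congr rfl fun n _ => ?_
  rw [coeff_C_mul, Polynomial.finset_sum_coeff]
  simp_rw [coeff_C_mul, coeff_X_pow, mul_ite, mul_one, mul_zero]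
  rw [Finset.sum_ite_eq (range n) t (fun k => m (n - 1 - k))]
  by_cases h : t < n <;> simp [Finset.mem_range, h]

lemma Lop_coeff_high {m : ℕ → ℝ} {f : Polynomial ℝ} {n : ℕ} (hdeg : f.natDegree = n)
    {t : ℕ} (ht : n - 1 < t) (hn : 1 ≤ n) : (Lop m f).coeff t = 0 := by
  rw [Lop_coeff]
  refine Finset.sum_eq_zero fun k hk => ?_
  rw [Finset.mem_range, hdeg] at hk
  have : ¬ t < k := by omega
  simp [this]

lemma Lop_lead {m : ℕ → ℝ} (hm0 : m 0 = 1) {f : Polynomial ℝ} (hf : f.Monic) {n : ℕ}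
    (hn : 1 ≤ n) (hdeg : f.natDegree = n) : (Lop m f).coeff (n - 1) = 1 := by
  rw [Lop_coeff, hdeg]
  rw [Finset.sum_eq_single n]
  · have h1 : n - 1 < n := by omega
    have h2 : n - 1 - (n - 1) = 0 := by omega
    have h3 : f.coeff n = 1 := by
      have := hf.leadingCoeff
      rwa [Polynomial.leadingCoeff, hdeg] at this
    simp [h1, h2, h3, hm0]
  · intro k hk hkn
    rw [Finset.mem_range] at hk
    have : ¬ n - 1 < k := by omega
    simp [this]
  · intro h
    exact absurd (Finset.self_mem_range_succ n) h

lemma Lop_natDegree {m : ℕ → ℝ} (hm0 : m 0 = 1) {f : Polynomial ℝ} (hf : f.Monic) {n : ℕ}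
    (hn : 1 ≤ n) (hdeg : f.natDegree = n) :
    (Lop m f).natDegree = n - 1 ∧ (Lop m f).Monic := by
  have hle : (Lop m f).natDegree ≤ n - 1 :=
    Polynomial.natDegree_le_iff_coeff_eq_zero.mpr fun t ht => Lop_coeff_high hdeg ht hn
  have hlead := Lop_lead hm0 hf hn hdeg
  have hge : n - 1 ≤ (Lop m f).natDegree :=
    Polynomial.le_natDegree_of_ne_zero (by rw [hlead]; exact one_ne_zero)
  have hdeq : (Lop m f).natDegree = n - 1 := le_antisymm hle hge
  exact ⟨hdeq, by rw [Polynomial.Monic, Polynomial.leadingCoeff, hdeq, hlead]⟩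

lemma key_scalar {β γ : ℝ} {mν mμ : ℕ → ℝ} (hshift : JacobiShift β γ mν mμ) (n j : ℕ) :
    mμ (n + j + 1) = β * mμ (n + j)
      + γ * ∑ i ∈ range j, mν i * mμ (n + j - 1 - i)
      + γ * ∑ k ∈ range n, mμ (n - 1 - k) * mν (k + j) := by
  have h := hshift (n + j + 1) (by omega)
  have h1 : n + j + 1 - 1 = n + j := by omega
  have h2 : n + j + 1 - 2 = n + j - 1 := by omega
  rw [h1] at h
  have hsplit : ∑ i ∈ range (n + j), mν i * mμ (n + j + 1 - 2 - i)
      = (∑ i ∈ range j, mν i * mμ (n + j - 1 - i))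
        + ∑ k ∈ range n, mμ (n - 1 - k) * mν (k + j) := by
    have hadd := Finset.sum_range_add (fun i => mν i * mμ (n + j + 1 - 2 - i)) j n
    rw [show range (n + j) = range (j + n) from by rw [Nat.add_comm], hadd]
    have e1 : ∑ x ∈ range j, mν x * mμ (n + j + 1 - 2 - x)
        = ∑ i ∈ range j, mν i * mμ (n + j - 1 - i) := by
      refine Finset.sum_congr rfl fun i _ => ?_
      rw [show n + j + 1 - 2 - i = n + j - 1 - i from by omega]
    have e2 : ∑ x ∈ range n, mν (j + x) * mμ (n + j + 1 - 2 - (j + x))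
        = ∑ k ∈ range n, mμ (n - 1 - k) * mν (k + j) := by
      refine Finset.sum_congr rfl fun k hk => ?_
      rw [Finset.mem_range] at hk
      rw [show n + j + 1 - 2 - (j + k) = n - 1 - k from by omega,
        show j + k = k + j from by omega, mul_comm]
    rw [e1, e2]
  rw [hsplit, mul_add] at h
  rw [h]
  ring

lemma key_int {μ ν : Measure ℝ} [IsProbabilityMeasure μ] [IsProbabilityMeasure ν]
    (hcsμ : CompactSupp μ) (hcsν : CompactSupp ν)
    {β γ : ℝ} (hshift : JacobiShift β γ (mom ν) (mom μ))
    (f : Polynomial ℝ) (j : ℕ) :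
    γ * ∫ x, (Lop (mom μ) f).eval x * x ^ j ∂ν
      = (∫ x, f.eval x * x ^ (j + 1) ∂μ) - β * (∫ x, f.eval x * x ^ j ∂μ)
        - γ * ∑ i ∈ range j, mom ν i * ∫ x, f.eval x * x ^ (j - 1 - i) ∂μ := by
  set N := f.natDegree + 1 with hN
  have hL0 : ∀ t, f.natDegree < t → (Lop (mom μ) f).coeff t = 0 := by
    intro t ht
    rw [Lop_coeff]
    refine Finset.sum_eq_zero fun k hk => ?_
    rw [Finset.mem_range] at hk
    have : ¬ t < k := by omega
    simp [this]
  have hLdeg : (Lop (mom μ) f).natDegree < N :=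
    Nat.lt_succ_of_le (Polynomial.natDegree_le_iff_coeff_eq_zero.mpr hL0)
  rw [int_mul_pow hcsν _ j hLdeg, int_mul_pow hcsμ f (j+1) (Nat.lt_succ_self _),
      int_mul_pow hcsμ f j (Nat.lt_succ_self _)]
  have hthird : ∀ i ∈ range j, mom ν i * ∫ x, f.eval x * x ^ (j - 1 - i) ∂μ
      = mom ν i * ∑ k ∈ range N, f.coeff k * mom μ (k + (j - 1 - i)) := fun i _ => by
    rw [int_mul_pow hcsμ f _ (Nat.lt_succ_self _)]
  rw [Finset.sum_congr rfl hthird]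
  have hLHS : ∑ t ∈ range N, (Lop (mom μ) f).coeff t * mom ν (t + j)
      = ∑ n ∈ range N, f.coeff n * ∑ t ∈ range n, mom μ (n - 1 - t) * mom ν (t + j) := by
    simp_rw [Lop_coeff, Finset.sum_mul]
    rw [Finset.sum_comm]
    refine Finset.sum_congr rfl fun n hn => ?_
    rw [Finset.mem_range, hN] at hn
    have hsub : ∑ t ∈ range N, f.coeff n * (if t < n then mom μ (n - 1 - t) else 0) * mom ν (t + j)
        = ∑ t ∈ range n, f.coeff n * (mom μ (n - 1 - t) * mom ν (t + j)) := by
      rw [← Finset.sum_subset (Finset.range_subset_range.mpr (by omega : n ≤ N))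
        (fun t _ htn => by rw [Finset.mem_range, not_lt] at htn
                           simp [if_neg (by omega : ¬ t < n)])]
      refine Finset.sum_congr rfl fun t ht => ?_
      rw [Finset.mem_range] at ht
      rw [if_pos ht]
      ring
    rw [hsub, ← Finset.mul_sum]
  rw [hLHS]
  have hswap : ∑ i ∈ range j, mom ν i * ∑ n ∈ range N, f.coeff n * mom μ (n + (j - 1 - i))
      = ∑ n ∈ range N, ∑ i ∈ range j, mom ν i * (f.coeff n * mom μ (n + (j - 1 - i))) := by
    simp_rw [Finset.mul_sum]
    rw [Finset.sum_comm]
  rw [hswap, Finset.mul_sum, Finset.mul_sum, Finset.mul_sum,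
      ← Finset.sum_sub_distrib, ← Finset.sum_sub_distrib]
  refine Finset.sum_congr rfl fun n _ => ?_
  have e3 : ∑ i ∈ range j, mom ν i * (f.coeff n * mom μ (n + (j - 1 - i)))
      = f.coeff n * ∑ i ∈ range j, mom ν i * mom μ (n + j - 1 - i) := by
    rw [Finset.mul_sum]
    refine Finset.sum_congr rfl fun i hi => ?_
    rw [Finset.mem_range] at hi
    rw [show n + (j - 1 - i) = n + j - 1 - i from by omega]
    ring
  rw [e3, show n + (j + 1) = n + j + 1 from rfl, key_scalar hshift n j]
  ring

lemma unique_orth {ρ : Measure ℝ} [IsProbabilityMeasure ρ] (hcs : CompactSupp ρ)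
    (hinf : (msupport ρ).Infinite) {P : ℕ → Polynomial ℝ} (hP : IsMonicOPS ρ P)
    {R : Polynomial ℝ} {d : ℕ} (hRm : R.Monic) (hRd : R.natDegree = d)
    (hRo : ∀ j, j < d → ∫ x, R.eval x * x ^ j ∂ρ = 0) : R = P d := by
  rw [← sub_eq_zero]
  set Q : Polynomial ℝ := R - P d with hQ
  by_contra hne
  have hQc : ∀ t, d ≤ t → Q.coeff t = 0 := by
    intro t ht
    rcases eq_or_lt_of_le ht with h | h
    · have h1 : R.coeff d = 1 := by
        have := hRm.leadingCoeff
        rwa [Polynomial.leadingCoeff, hRd] at this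
      have h2 : (P d).coeff d = 1 := by
        have := (hP.1 d).leadingCoeff
        rwa [Polynomial.leadingCoeff, hP.2.1 d] at this
      rw [← h]
      simp [hQ, h1, h2]
    · have h1 : R.coeff t = 0 := coeff_eq_zero_of_natDegree_lt (by omega)
      have h2 : (P d).coeff t = 0 := coeff_eq_zero_of_natDegree_lt (by rw [hP.2.1 d]; omega)
      simp [hQ, h1, h2]
  have hQd : Q.natDegree < d := by
    by_contra h
    rw [not_lt] at h
    exact (Polynomial.leadingCoeff_ne_zero.mpr hne) (hQc _ h)
  have hQo : ∀ j, j < d → ∫ x, Q.eval x * x ^ j ∂ρ = 0 := by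
    intro j hj
    have hi1 : Integrable (fun x => R.eval x * x ^ j) ρ := by
      have := integrable_eval hcs (R * X ^ j)
      simpa [eval_mul, eval_pow] using this
    have hi2 : Integrable (fun x => (P d).eval x * x ^ j) ρ := by
      have := integrable_eval hcs (P d * X ^ j)
      simpa [eval_mul, eval_pow] using this
    have : ∫ x, Q.eval x * x ^ j ∂ρ
        = (∫ x, R.eval x * x ^ j ∂ρ) - ∫ x, (P d).eval x * x ^ j ∂ρ := by
      rw [← integral_sub hi1 hi2]
      congr 1 with x
      simp [hQ, eval_sub]
      ring
    rw [this, hRo j hj, orth_pow hcs hP hj, sub_zero]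
  have hQQ : ∫ x, Q.eval x * Q.eval x ∂ρ = 0 := by
    have hev : ∀ x : ℝ, Q.eval x * Q.eval x
        = ∑ k ∈ range (Q.natDegree + 1), Q.coeff k * (Q.eval x * x ^ k) := by
      intro x
      have h0 : Q.eval x = ∑ k ∈ range (Q.natDegree + 1), Q.coeff k * x ^ k :=
        eval_eq_sum_range _
      calc Q.eval x * Q.eval x
          = Q.eval x * ∑ k ∈ range (Q.natDegree + 1), Q.coeff k * x ^ k := by rw [← h0]
        _ = ∑ k ∈ range (Q.natDegree + 1), Q.coeff k * (Q.eval x * x ^ k) := by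
            rw [Finset.mul_sum]
            exact Finset.sum_congr rfl fun k _ => by ring
    simp_rw [hev]
    rw [integral_finset_sum]
    · refine Finset.sum_eq_zero fun k hk => ?_
      rw [Finset.mem_range] at hk
      rw [integral_const_mul, hQo k (by omega), mul_zero]
    · intro k _
      have := (integrable_eval hcs (Q * X ^ k)).const_mul (Q.coeff k)
      simpa [eval_mul, eval_pow] using this
  have hiQQ : Integrable (fun x => Q.eval x * Q.eval x) ρ := by
    have := integrable_eval hcs (Q * Q)
    simpa [eval_mul] using this
  have hae : (fun x => Q.eval x * Q.eval x) =ᵐ[ρ] 0 :=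
    (integral_eq_zero_iff_of_nonneg (fun x => mul_self_nonneg _) hiQQ).mp hQQ
  have hA0 : ρ {x | Q.eval x ≠ 0} = 0 := by
    have h1 := ae_iff.mp hae
    have hsets : {x : ℝ | Q.eval x ≠ 0}
        = {x : ℝ | ¬ (Q.eval x * Q.eval x = (0 : ℝ → ℝ) x)} := by
      ext x
      simp [mul_self_eq_zero]
    rw [hsets]
    exact h1
  have hopen : IsOpen {x : ℝ | Q.eval x ≠ 0} :=
    isOpen_ne.preimage Q.continuous
  have hsub : msupport ρ ⊆ {x : ℝ | Q.IsRoot x} := by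
    intro x hx
    by_contra h
    exact hx _ (hopen.mem_nhds h) hA0
  exact hne (Q.eq_zero_of_infinite_isRoot (hinf.mono hsub))

end Helpers

theorem stmt16 (μ ν : Measure ℝ) [IsProbabilityMeasure μ] [IsProbabilityMeasure ν]
    (hcsμ : CompactSupp μ) (hcsν : CompactSupp ν)
    (hinfμ : (msupport μ).Infinite) (hinfν : (msupport ν).Infinite)
    (β : ℝ) (γ : ℝ) (hγ : 0 < γ)
    (hshift : JacobiShift β γ (mom ν) (mom μ))
    (Pμ Pν : ℕ → Polynomial ℝ) (hPμ : IsMonicOPS μ Pμ) (hPν : IsMonicOPS ν Pν) :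
    ∀ n : ℕ, 1 ≤ n → Lop (mom μ) (Pμ n) = Pν (n - 1) := by
  intro n hn
  have hmom0 : mom μ 0 = 1 := by simp [mom]
  obtain ⟨hdeq, hmon⟩ := Lop_natDegree hmom0 (hPμ.1 n) hn (hPμ.2.1 n)
  refine unique_orth hcsν hinfν hPν hmon hdeq ?_
  intro j hj
  have hki := key_int hcsμ hcsν hshift (Pμ n) j
  have h1 : ∫ x, (Pμ n).eval x * x ^ (j + 1) ∂μ = 0 := orth_pow hcsμ hPμ (by omega)
  have h2 : ∫ x, (Pμ n).eval x * x ^ j ∂μ = 0 := orth_pow hcsμ hPμ (by omega)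
  have h3 : ∑ i ∈ Finset.range j, mom ν i * ∫ x, (Pμ n).eval x * x ^ (j - 1 - i) ∂μ = 0 :=
    Finset.sum_eq_zero fun i _ => by
      rw [orth_pow hcsμ hPμ (by omega : j - 1 - i < n), mul_zero]
  rw [h1, h2, h3] at hki
  have hki' : γ * ∫ x, (Lop (mom μ) (Pμ n)).eval x * x ^ j ∂ν = 0 := by
    rw [hki]; ring
  exact (mul_eq_zero.mp hki').resolve_left (ne_of_gt hγ)
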